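/- arXiv:1003.2352 — 5 statements merged into one kernel-verified Lean document; each statement's English description precedes it below -/
import Mathlib

section
/- Let A be a subset of an abelian group Z. The following are equivalent: (i) 0 ∈ A and A − 2A ⊆ A; (ii) 0 ∈ A and 2A − A ⊆ A; (iii) 2·ℤ[A] ⊆ A and 2·ℤ[A] − A ⊆ A, where ℤ[A] is the subgroup generated by A; (iv) A is a union of cosets modulo 2·ℤ[A], including the trivial coset 2·ℤ[A]. Moreover, any such 'pointed reflection subspace' A is symmetric: A = −A. -/
/-- Characterizations of pointed reflection subspaces of an abelian group, and their
symmetry. Here `ℤ[A]` is the subgroup generated by `A`. -/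
theorem pointed_reflection_subspace_tfae (Z : Type*) [AddCommGroup Z] (A : Set Z) :
    List.TFAE
      [ -- (i) 0 ∈ A and A − 2A ⊆ A
        ((0 : Z) ∈ A ∧ ∀ a₁ ∈ A, ∀ a₂ ∈ A, a₁ - 2 • a₂ ∈ A),
        -- (ii) 0 ∈ A and 2A − A ⊆ A
        ((0 : Z) ∈ A ∧ ∀ a₁ ∈ A, ∀ a₂ ∈ A, 2 • a₁ - a₂ ∈ A),
        -- (iii) 2ℤ[A] ⊆ A and 2ℤ[A] − A ⊆ A
        ((∀ x ∈ AddSubgroup.closure A, 2 • x ∈ A) ∧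
         (∀ x ∈ AddSubgroup.closure A, ∀ a ∈ A, 2 • x - a ∈ A)),
        -- (iv) A is a union of cosets modulo 2ℤ[A], including the trivial coset
        ((∀ x ∈ AddSubgroup.closure A, 2 • x ∈ A) ∧
         (∀ a ∈ A, ∀ x ∈ AddSubgroup.closure A, a + 2 • x ∈ A)) ]
    ∧
    -- any pointed reflection subspace is symmetric
    (((0 : Z) ∈ A ∧ ∀ a₁ ∈ A, ∀ a₂ ∈ A, a₁ - 2 • a₂ ∈ A) → A = -A) := by
  have hneg : (((0 : Z) ∈ A ∧ ∀ a₁ ∈ A, ∀ a₂ ∈ A, a₁ - 2 • a₂ ∈ A) →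
      ∀ a ∈ A, -a ∈ A) := by
    rintro ⟨h0, h⟩ a ha
    have := h a ha a ha
    simpa [two_smul, sub_add_eq_sub_sub] using this
  have symm : (((0 : Z) ∈ A ∧ ∀ a₁ ∈ A, ∀ a₂ ∈ A, a₁ - 2 • a₂ ∈ A) → A = -A) := by
    intro h
    ext x
    simp only [Set.mem_neg]
    exact ⟨fun hx => by simpa using hneg h x hx, fun hx => by simpa using hneg h _ hx⟩
  refine ⟨?_, symm⟩
  tfae_have 1 → 2 := by
    rintro ⟨h0, h⟩
    refine ⟨h0, fun a₁ h1 a₂ h2 => ?_⟩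
    have := h (-a₂) (hneg ⟨h0, h⟩ a₂ h2) (-a₁) (hneg ⟨h0, h⟩ a₁ h1)
    simpa [sub_eq_add_neg, add_comm] using this
  tfae_have 2 → 1 := by
    rintro ⟨h0, h⟩
    have hn : ∀ a ∈ A, -a ∈ A := fun a ha => by simpa using h 0 h0 a ha
    refine ⟨h0, fun a₁ h1 a₂ h2 => ?_⟩
    have := h (-a₂) (hn a₂ h2) (-a₁) (hn a₁ h1)
    simpa [sub_eq_add_neg, add_comm] using this
  tfae_have 1 → 3 := by
    rintro ⟨h0, h⟩
    have h2 : ∀ a₁ ∈ A, ∀ a₂ ∈ A, 2 • a₁ - a₂ ∈ A := by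
      intro a₁ h1 a₂ ha2
      have := h (-a₂) (hneg ⟨h0, h⟩ a₂ ha2) (-a₁) (hneg ⟨h0, h⟩ a₁ h1)
      simpa [sub_eq_add_neg, add_comm] using this
    have key : ∀ x ∈ AddSubgroup.closure A, ∀ a ∈ A, 2 • x - a ∈ A := by
      intro x hx
      induction hx using AddSubgroup.closure_induction with
      | mem y hy => exact fun a ha => h2 y hy a ha
      | zero => intro a ha; simpa using hneg ⟨h0, h⟩ a ha
      | add x y hx hy px py =>
          intro a ha
          have hax : a - 2 • x ∈ A := by
            have := hneg ⟨h0, h⟩ _ (px a ha)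
            simpa using this
          have := py _ hax
          have e : 2 • y - (a - 2 • x) = 2 • (x + y) - a := by abel
          rwa [e] at this
      | neg x hx px =>
          intro a ha
          have hna : -a ∈ A := hneg ⟨h0, h⟩ a ha
          have := hneg ⟨h0, h⟩ _ (px _ hna)
          have e : -(2 • x - -a) = 2 • (-x) - a := by abel
          rwa [e] at this
    refine ⟨fun x hx => ?_, key⟩
    simpa using key x hx 0 h0
  tfae_have 3 → 4 := by
    rintro ⟨hA, h⟩
    refine ⟨hA, fun a ha x hx => ?_⟩
    have h0 : (0 : Z) ∈ A := by simpa using hA 0 (zero_mem _)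
    have hna : -a ∈ A := by simpa using h 0 (zero_mem _) a ha
    have := h x hx (-a) hna
    simpa [sub_eq_add_neg, add_comm] using this
  tfae_have 4 → 1 := by
    rintro ⟨hA, h⟩
    have h0 : (0 : Z) ∈ A := by simpa using hA 0 (zero_mem _)
    refine ⟨h0, fun a₁ h1 a₂ h2 => ?_⟩
    have hx : -a₂ ∈ AddSubgroup.closure A :=
      neg_mem (AddSubgroup.subset_closure h2)
    have := h a₁ h1 (-a₂) hx
    simpa [sub_eq_add_neg, add_comm] using this
  tfae_finish
end

section
/- Let A be a subset of an abelian group Z, and let Λ = ℤ[A] be the subgroup generated by A. The following are equivalent: (i) 2A − A ⊆ A and A = −A; (ii) 2λ + a ∈ A for every λ ∈ Λ and a ∈ A; (iii) A is a union of cosets modulo 2Λ; (iv) a₁ − 2a₂ ∈ A for all a₁,a₂ ∈ A. -/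
/-- Characterizations of symmetric reflection subspaces: for a nonempty subset `A` of an
abelian group `Z` with `Λ = ℤ[A]` the subgroup generated by `A`, TFAE:
(i) `2A − A ⊆ A` and `A = −A`; (ii) `2λ + a ∈ A` for all `λ ∈ Λ`, `a ∈ A`;
(iii) `A` is a union of cosets modulo `2Λ`; (iv) `a₁ − 2a₂ ∈ A` for all `a₁, a₂ ∈ A`. -/
theorem symmetric_reflection_subspace_tfae (Z : Type*) [AddCommGroup Z] (A : Set Z)
    (hne : A.Nonempty) :
    List.TFAE
      [ -- (i)
        ((∀ a₁ ∈ A, ∀ a₂ ∈ A, 2 • a₁ - a₂ ∈ A) ∧ A = -A),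
        -- (ii)
        (∀ lam ∈ AddSubgroup.closure A, ∀ a ∈ A, 2 • lam + a ∈ A),
        -- (iii) A is a union of cosets modulo 2Λ
        (∀ a ∈ A, ∀ lam ∈ AddSubgroup.closure A, a + 2 • lam ∈ A),
        -- (iv)
        (∀ a₁ ∈ A, ∀ a₂ ∈ A, a₁ - 2 • a₂ ∈ A) ] := by
  tfae_have 1 → 4 := by
    rintro ⟨h, hsym⟩ a₁ h₁ a₂ h₂
    have hn₁ : -a₁ ∈ A := by rw [hsym]; simpa using h₁
    have hn₂ : -a₂ ∈ A := by rw [hsym]; simpa using h₂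
    have := h _ hn₂ _ hn₁
    have heq : 2 • (-a₂) - -a₁ = a₁ - 2 • a₂ := by abel
    rwa [heq] at this
  tfae_have 4 → 2 := by
    intro h4
    have hneg : ∀ a ∈ A, -a ∈ A := by
      intro a ha
      have := h4 a ha a ha
      have heq : a - 2 • a = -a := by abel
      rwa [heq] at this
    have hadd : ∀ b ∈ A, ∀ a ∈ A, 2 • b + a ∈ A := by
      intro b hb a ha
      have := h4 a ha (-b) (hneg b hb)
      have heq : a - 2 • (-b) = 2 • b + a := by abel
      rwa [heq] at this
    let S : AddSubgroup Z :=
      { carrier := {l | ∀ a ∈ A, 2 • l + a ∈ A}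
        zero_mem' := by intro a ha; simpa using ha
        add_mem' := by
          intro x y hx hy a ha
          have := hx _ (hy a ha)
          have heq : 2 • x + (2 • y + a) = 2 • (x + y) + a := by abel
          rwa [heq] at this
        neg_mem' := by
          intro x hx a ha
          have := hneg _ (hx (-a) (hneg a ha))
          have heq : -(2 • x + -a) = 2 • (-x) + a := by abel
          rwa [heq] at this }
    have hle : AddSubgroup.closure A ≤ S := (AddSubgroup.closure_le S).2 (fun b hb => hadd b hb)
    exact fun lam hlam a ha => hle hlam a ha
  tfae_have 2 → 3 := by
    intro h a ha lam hlam
    rw [add_comm]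
    exact h lam hlam a ha
  tfae_have 3 → 1 := by
    intro h3
    have hneg : ∀ a ∈ A, -a ∈ A := by
      intro a ha
      have := h3 a ha (-a) (neg_mem (AddSubgroup.subset_closure ha))
      have heq : a + 2 • (-a) = -a := by abel
      rwa [heq] at this
    constructor
    · intro a₁ h₁ a₂ h₂
      have hmem : a₁ - a₂ ∈ AddSubgroup.closure A :=
        sub_mem (AddSubgroup.subset_closure h₁) (AddSubgroup.subset_closure h₂)
      have := h3 a₂ h₂ _ hmem
      have heq : a₂ + 2 • (a₁ - a₂) = 2 • a₁ - a₂ := by abel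
      rwa [heq] at this
    · ext x
      rw [Set.mem_neg]
      constructor
      · intro hx
        simpa using hneg x hx
      · intro hx
        simpa using hneg (-x) hx
  tfae_finish
end

section
/- Let E be a Lie algebra with an invariant nondegenerate symmetric bilinear form (·|·), and let K be an ideal of E with K = [E,K]. Then {z ∈ K : (z | K) = 0} = Z(K), the centre of K. -/
/-- Let `E` be a Lie algebra with an invariant nondegenerate symmetric bilinear form,
and `K` an ideal of `E` with `K = [E,K]`. Then the radical of the restricted form on `K`
equals the centre of `K`: `{z ∈ K : (z|K) = 0} = Z(K)`. -/
theorem radical_restricted_form_eq_center (F : Type*) [Field F] [CharZero F]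
    (E : Type*) [LieRing E] [LieAlgebra F E]
    (B : E →ₗ[F] E →ₗ[F] F)
    (hsymm : ∀ a b : E, B a b = B b a)
    (hinv : ∀ a b c : E, B ⁅a, b⁆ c = B a ⁅b, c⁆)
    (hnondeg : ∀ a : E, (∀ b : E, B a b = 0) → a = 0)
    (K : LieIdeal F E)
    (hK : ⁅(⊤ : LieIdeal F E), K⁆ = K) :
    ∀ z ∈ K, ((∀ k ∈ K, B z k = 0) ↔ (∀ k ∈ K, ⁅z, k⁆ = 0)) := by
  intro z hz
  constructor
  · intro h k hk
    apply hnondeg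
    intro e
    rw [hinv]
    exact h _ (lie_mem_left F E K k e hk)
  · intro h k hk
    rw [← hK] at hk
    rw [← LieSubmodule.mem_toSubmodule, LieSubmodule.lieIdeal_oper_eq_linear_span'] at hk
    induction hk using Submodule.span_induction with
    | mem m hm =>
        obtain ⟨x, -, n, hn, rfl⟩ := hm
        rw [hsymm, hinv]
        have : ⁅n, z⁆ = 0 := by
          rw [← lie_skew, h n hn, neg_zero]
        rw [this, map_zero]
    | zero => simp
    | add a b _ _ ha hb => rw [map_add, ha, hb, add_zero]
    | smul c a _ ha => rw [map_smul, ha, smul_zero]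
end

section
/- The centre of the Lie algebra sl_N(A) over a unital associative algebra A is {z·E_N : z ∈ Z(A) ∩ [A,A]}, where E_N is the identity matrix, Z(A) is the centre of the associative algebra A, and [A,A] is the span of commutators. -/
open Matrix

/-- The centre of `sl_N(A)` is `{z·E_N : z ∈ Z(A) ∩ [A,A]}`. -/
theorem center_slN (F : Type*) [Field F] [CharZero F]
    (A : Type*) [Ring A] [Algebra F A] (N : ℕ) (hN : 2 ≤ N) :
    ∀ slN : Submodule F (Matrix (Fin N) (Fin N) A),
      slN = Submodule.span F
          {m : Matrix (Fin N) (Fin N) A |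
            ∃ y z : Matrix (Fin N) (Fin N) A, m = ⁅y, z⁆} →
      ∀ x : Matrix (Fin N) (Fin N) A,
        (x ∈ slN ∧ ∀ y ∈ slN, ⁅x, y⁆ = 0) ↔
        (∃ z : A, (∀ a : A, z * a = a * z) ∧
          z ∈ Submodule.span F {c : A | ∃ a b : A, c = a * b - b * a} ∧
          x = z • (1 : Matrix (Fin N) (Fin N) A)) := by
  intro slN hslN x
  set S : Set A := {c : A | ∃ a b : A, c = a * b - b * a} with hS
  -- basic facts
  have hmul : ∀ a b : A, (a • (1 : Matrix (Fin N) (Fin N) A)) * (b • 1) = (a * b) • 1 := by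
    intro a b
    rw [Matrix.smul_mul, one_mul, smul_smul]
  have hsmul_one : ∀ c : A, c • (1 : Matrix (Fin N) (Fin N) A) =
      Matrix.diagonal (fun _ => c) := fun c => Matrix.smul_one_eq_diagonal c
  -- standard basis matrices with i ≠ j are in slN
  have hE : ∀ (i j : Fin N) (a : A), i ≠ j → Matrix.single i j a ∈ slN := by
    intro i j a hij
    rw [hslN]
    refine Submodule.subset_span ⟨Matrix.single i j a, Matrix.single j j 1, ?_⟩
    rw [Ring.lie_def, Matrix.single_mul_single_same, Matrix.single_mul_single_of_ne (h := hij.symm),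
      mul_one, sub_zero]
  -- trace of elements of slN lies in the span of commutators
  have htr : ∀ m ∈ slN, Matrix.trace m ∈ Submodule.span F S := by
    rw [hslN]
    intro m hm
    induction hm using Submodule.span_induction with
    | mem m hm =>
      obtain ⟨y, w, rfl⟩ := hm
      have h1 : Matrix.trace ⁅y, w⁆ = ∑ i, ∑ j, (y i j * w j i - w j i * y i j) := by
        rw [Ring.lie_def, Matrix.trace_sub]
        simp only [Matrix.trace, Matrix.diag, Matrix.mul_apply, Finset.sum_sub_distrib]
        congr 1
        rw [Finset.sum_comm]
      rw [h1]
      exact Submodule.sum_mem _ fun i _ => Submodule.sum_mem _ fun j _ =>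
        Submodule.subset_span ⟨_, _, rfl⟩
    | zero => simp
    | add m₁ m₂ _ _ h1 h2 => rw [Matrix.trace_add]; exact Submodule.add_mem _ h1 h2
    | smul c m _ h => rw [Matrix.trace_smul]; exact Submodule.smul_mem _ _ h
  constructor
  · rintro ⟨hx, hc⟩
    -- x commutes with all off-diagonal basis matrices, hence is scalar
    have hcomm : Pairwise fun i j : Fin N => Commute (Matrix.single i j 1) x := by
      intro i j hij
      have h0 := hc _ (hE i j 1 hij)
      rw [Ring.lie_def, sub_eq_zero] at h0
      exact h0.symm
    obtain ⟨z, hz⟩ := Matrix.mem_range_scalar_of_commute_single hcomm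
    have hxz : x = z • (1 : Matrix (Fin N) (Fin N) A) := by
      rw [hsmul_one, ← hz, Matrix.scalar_apply]
    have hNe : NeZero N := ⟨by omega⟩
    have i0 : Fin N := ⟨0, by omega⟩
    -- centrality of z
    have hzdiag : ∀ i : Fin N, x i i = z := by
      intro i
      rw [hxz, hsmul_one, Matrix.diagonal_apply_eq]
    have hcen : ∀ a : A, z * a = a * z := by
      intro a
      set i0 : Fin N := ⟨0, by omega⟩
      set i1 : Fin N := ⟨1, by omega⟩
      have hne : i0 ≠ i1 := by simp [i0, i1, Fin.ext_iff]
      have h0 := hc _ (hE i0 i1 a hne)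
      rw [Ring.lie_def, sub_eq_zero] at h0
      have h1 := congrFun (congrFun h0 i0) i1
      rw [Matrix.mul_single_apply_same,
        Matrix.single_mul_apply_same, hzdiag, hzdiag] at h1
      exact h1
    refine ⟨z, hcen, ?_, hxz⟩
    -- z ∈ span of commutators using the trace
    have htx := htr x hx
    rw [hxz, Matrix.trace_smul, Matrix.trace_one, Fintype.card_fin] at htx
    have hzN : z • (N : A) = (N : F) • z := by
      rw [smul_eq_mul, Nat.cast_smul_eq_nsmul, nsmul_eq_mul]
      exact ((Nat.cast_commute N z).eq).symm
    rw [hzN] at htx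
    have hN0 : (N : F) ≠ 0 := Nat.cast_ne_zero.mpr (by omega)
    have : z = (N : F)⁻¹ • ((N : F) • z) := (inv_smul_smul₀ hN0 z).symm
    rw [this]
    exact Submodule.smul_mem _ _ htx
  · rintro ⟨z, hzc, hzs, rfl⟩
    constructor
    · -- z • 1 ∈ slN
      clear hzc
      induction hzs using Submodule.span_induction with
      | mem c hcm =>
        obtain ⟨a, b, rfl⟩ := hcm
        rw [hslN]
        refine Submodule.subset_span ⟨a • 1, b • 1, ?_⟩
        rw [Ring.lie_def, hmul, hmul, sub_smul]
      | zero => rw [zero_smul]; exact Submodule.zero_mem _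
      | add c d _ _ h1 h2 => rw [add_smul]; exact Submodule.add_mem _ h1 h2
      | smul r c _ h => rw [smul_assoc]; exact Submodule.smul_mem _ _ h
    · -- z • 1 commutes with everything
      intro y _
      rw [Ring.lie_def, sub_eq_zero, hsmul_one]
      ext k l
      rw [Matrix.diagonal_mul, Matrix.mul_diagonal, hzc]
end

section
/- Let g be a finite-dimensional central simple Lie algebra over F and A a unital commutative associative F-algebra. Then the map F ⊗ A → Cent_F(g ⊗ A) sending s ⊗ a to the linear map u ⊗ b ↦ su ⊗ ab is an isomorphism of F-algebras; in particular every centroidal transformation of g ⊗ A is of the form u ⊗ b ↦ u ⊗ ab for a unique a ∈ A. -/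
open TensorProduct

section CentroidAux

variable (F : Type*) [Field F] (A : Type*) [AddCommGroup A] [Module F A]
variable (g : Type*) [AddCommGroup g] [Module F g]

/-- Apply a functional on the left factor. -/
noncomputable def centroidPi (l : A →ₗ[F] F) : A ⊗[F] g →ₗ[F] g :=
  (TensorProduct.lid F g).toLinearMap ∘ₗ LinearMap.rTensor g l

@[simp] lemma centroidPi_tmul (l : A →ₗ[F] F) (a : A) (u : g) :
    centroidPi F A g l (a ⊗ₜ u) = l a • u := by
  simp [centroidPi]

lemma centroidPi_eq_zero (y : A ⊗[F] g)
    (h : ∀ l : A →ₗ[F] F, centroidPi F A g l y = 0) : y = 0 := by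
  classical
  let BA := Module.Basis.ofVectorSpace F A
  let Bg := Module.Basis.ofVectorSpace F g
  let B := BA.tensorProduct Bg
  have hrepr : ∀ (i) (k) (z : A ⊗[F] g),
      B.repr z (i, k) = Bg.coord k (centroidPi F A g (BA.coord i) z) := by
    intro i k z
    induction z using TensorProduct.induction_on with
    | zero => simp
    | tmul a u =>
        simp [B, Module.Basis.tensorProduct_repr_tmul_apply, Module.Basis.coord_apply, mul_comm]
    | add x y hx hy => simp [map_add, hx, hy]
  have hz : B.repr y = 0 := by
    ext ⟨i, k⟩
    rw [Finsupp.coe_zero, Pi.zero_apply, hrepr i k y, h (BA.coord i)]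
    simp
  exact (LinearEquiv.map_eq_zero_iff B.repr).mp hz

/-- Apply a functional on the right factor. -/
noncomputable def centroidQ (m : g →ₗ[F] F) : A ⊗[F] g →ₗ[F] A :=
  (TensorProduct.rid F A).toLinearMap ∘ₗ LinearMap.lTensor A m

@[simp] lemma centroidQ_tmul (m : g →ₗ[F] F) (a : A) (u : g) :
    centroidQ F A g m (a ⊗ₜ u) = m u • a := by
  simp [centroidQ]

lemma centroidQ_pi (m : g →ₗ[F] F) (l : A →ₗ[F] F) (z : A ⊗[F] g) :
    l (centroidQ F A g m z) = m (centroidPi F A g l z) := by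
  induction z using TensorProduct.induction_on with
  | zero => simp
  | tmul a u => simp [mul_comm]
  | add x y hx hy => simp [map_add, hx, hy]

/-- Separation: if `a ⊗ u = 0` with `u ≠ 0`, then `a = 0`. -/
lemma tmul_eq_zero_left (a : A) (u : g) (hu : u ≠ 0) (h : a ⊗ₜ[F] u = 0) : a = 0 := by
  rw [← Module.forall_dual_apply_eq_zero_iff F a]
  intro l
  have := congrArg (centroidPi F A g l) h
  rw [centroidPi_tmul, map_zero] at this
  rcases smul_eq_zero.mp this with h' | h'
  · exact h'
  · exact absurd h' hu

end CentroidAux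

section CentroidLie

variable (F : Type*) [Field F] (A : Type*) [CommRing A] [Algebra F A]
variable (g : Type*) [LieRing g] [LieAlgebra F g]

lemma centroidPi_bracket (l : A →ₗ[F] F) (u : g) (z : A ⊗[F] g) :
    centroidPi F A g l ⁅(1 : A) ⊗ₜ[F] u, z⁆ = ⁅u, centroidPi F A g l z⁆ := by
  induction z using TensorProduct.induction_on with
  | zero => simp
  | tmul a v =>
      rw [LieAlgebra.ExtendScalars.bracket_tmul, one_mul, centroidPi_tmul, centroidPi_tmul,
        lie_smul]
  | add x y hx hy => simp only [lie_add, map_add, hx, hy]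

end CentroidLie

/-- For a finite-dimensional central simple Lie algebra `g` over `F` and a unital
commutative associative `F`-algebra `A`, the centroid of `g ⊗ A` (realized as `A ⊗ g`)
consists exactly of the maps `u ⊗ b ↦ u ⊗ ab`, each occurring for a unique `a ∈ A`;
and `a ↦ χ_a` is an algebra homomorphism. -/
theorem centroid_of_tensor (F : Type*) [Field F] [CharZero F]
    (g : Type*) [LieRing g] [LieAlgebra F g] [FiniteDimensional F g]
    [LieAlgebra.IsSimple F g]
    (hcentral : ∀ χ : g →ₗ[F] g, (∀ a b : g, χ ⁅a, b⁆ = ⁅a, χ b⁆) →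
      ∃ s : F, χ = s • LinearMap.id)
    (A : Type*) [CommRing A] [Algebra F A] :
    -- each multiplication map `b ⊗ u ↦ (a b) ⊗ u` is a centroidal transformation
    (∀ a : A, ∀ x y : A ⊗[F] g,
      (LinearMap.rTensor g (LinearMap.mulLeft F a)) ⁅x, y⁆ =
        ⁅x, (LinearMap.rTensor g (LinearMap.mulLeft F a)) y⁆) ∧
    -- `a ↦ χ_a` is multiplicative
    (∀ a₁ a₂ : A,
      LinearMap.rTensor (N := A) g (LinearMap.mulLeft F (a₁ * a₂)) =
        (LinearMap.rTensor g (LinearMap.mulLeft F a₁)) ∘ₗ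
          (LinearMap.rTensor g (LinearMap.mulLeft F a₂))) ∧
    -- every centroidal transformation is `b ⊗ u ↦ (a b) ⊗ u` for a unique `a`
    (∀ χ : A ⊗[F] g →ₗ[F] A ⊗[F] g,
      (∀ x y : A ⊗[F] g, χ ⁅x, y⁆ = ⁅x, χ y⁆) →
      ∃! a : A, ∀ (b : A) (u : g), χ (b ⊗ₜ[F] u) = (a * b) ⊗ₜ[F] u) := by
  classical
  -- a nonzero bracket in g
  have hna : ∃ u v : g, ⁅u, v⁆ ≠ 0 := by
    by_contra h
    push_neg at h
    exact (LieAlgebra.IsSimple.non_abelian (R := F) (L := g)) ⟨fun x y => h x y⟩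
  obtain ⟨u₀, v₀, hw⟩ := hna
  set w : g := ⁅u₀, v₀⁆ with hwdef
  -- a functional on g with value 1 at w
  have hμ : ∃ μ : g →ₗ[F] F, μ w = 1 := by
    have : ¬(∀ φ : Module.Dual F g, φ w = 0) := by
      rw [Module.forall_dual_apply_eq_zero_iff]; exact hw
    push_neg at this
    obtain ⟨φ, hφ⟩ := this
    exact ⟨(φ w)⁻¹ • φ, by simp [inv_mul_cancel₀ hφ]⟩
  obtain ⟨μ, hμ1⟩ := hμ
  refine ⟨?_, ?_, ?_⟩
  · -- part 1
    intro a x y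
    induction x using TensorProduct.induction_on with
    | zero => simp
    | tmul b u =>
        induction y using TensorProduct.induction_on with
        | zero => simp
        | tmul c v =>
            rw [LieAlgebra.ExtendScalars.bracket_tmul, LinearMap.rTensor_tmul,
              LinearMap.rTensor_tmul, LieAlgebra.ExtendScalars.bracket_tmul]
            simp only [LinearMap.mulLeft_apply]
            ring_nf
        | add y₁ y₂ h₁ h₂ => simp only [lie_add, map_add, h₁, h₂]
    | add x₁ x₂ h₁ h₂ => simp only [add_lie, map_add, h₁, h₂]
  · -- part 2
    intro a₁ a₂
    rw [← LinearMap.rTensor_comp]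
    congr 1
    ext b
    simp [mul_assoc]
  · -- part 3
    intro χ hχ
    -- component scalars
    have key : ∀ (b : A) (l : A →ₗ[F] F), ∃ s : F, ∀ u : g,
        centroidPi F A g l (χ (b ⊗ₜ[F] u)) = s • u := by
      intro b l
      set T : g →ₗ[F] g :=
        (centroidPi F A g l) ∘ₗ χ ∘ₗ (TensorProduct.mk F A g b) with hT
      have hTeq : ∀ x y : g, T ⁅x, y⁆ = ⁅x, T y⁆ := by
        intro x y
        have h1 : b ⊗ₜ[F] ⁅x, y⁆ = ⁅(1 : A) ⊗ₜ[F] x, b ⊗ₜ[F] y⁆ := by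
          rw [LieAlgebra.ExtendScalars.bracket_tmul, one_mul]
        simp only [hT, LinearMap.comp_apply, TensorProduct.mk_apply]
        rw [h1, hχ, centroidPi_bracket]
      obtain ⟨s, hs⟩ := hcentral T hTeq
      exact ⟨s, fun u => by
        have := congrArg (fun f => f u) hs
        simpa [hT] using this⟩
    -- the coefficient for each b
    have coeff : ∀ b : A, ∀ u : g, χ (b ⊗ₜ[F] u) = (centroidQ F A g μ (χ (b ⊗ₜ[F] w))) ⊗ₜ[F] u := by
      intro b u
      set ab : A := centroidQ F A g μ (χ (b ⊗ₜ[F] w)) with hab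
      have hlab : ∀ l : A →ₗ[F] F, ∀ u : g,
          centroidPi F A g l (χ (b ⊗ₜ[F] u)) = l ab • u := by
        intro l u
        obtain ⟨s, hs⟩ := key b l
        have h1 : l ab = s := by
          rw [hab, centroidQ_pi, hs w, map_smul, hμ1, smul_eq_mul, mul_one]
        rw [hs u, h1]
      have : χ (b ⊗ₜ[F] u) - ab ⊗ₜ[F] u = 0 := by
        apply centroidPi_eq_zero
        intro l
        rw [map_sub, hlab l u, centroidPi_tmul, sub_self]
      exact sub_eq_zero.mp this
    set a : A := centroidQ F A g μ (χ ((1 : A) ⊗ₜ[F] w)) with ha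
    have hab_eq : ∀ b : A, centroidQ F A g μ (χ (b ⊗ₜ[F] w)) = a * b := by
      intro b
      have h1 : ⁅b ⊗ₜ[F] u₀, (1 : A) ⊗ₜ[F] v₀⁆ = b ⊗ₜ[F] w := by
        rw [LieAlgebra.ExtendScalars.bracket_tmul, mul_one, hwdef]
      have h2 : χ (b ⊗ₜ[F] w) = (b * a) ⊗ₜ[F] w := by
        rw [← h1, hχ, coeff 1 v₀, ← ha, LieAlgebra.ExtendScalars.bracket_tmul, hwdef]
      have h3 : (centroidQ F A g μ (χ (b ⊗ₜ[F] w)) - b * a) ⊗ₜ[F] w = 0 := by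
        rw [TensorProduct.sub_tmul, ← coeff b w, h2, sub_self]
      have h4 := tmul_eq_zero_left F A g _ w hw h3
      rw [mul_comm]
      exact sub_eq_zero.mp h4
    refine ⟨a, fun b u => by rw [coeff b u, hab_eq b], ?_⟩
    intro a' ha'
    have h5 : a' ⊗ₜ[F] w = a ⊗ₜ[F] w := by
      have h7 := ha' 1 w
      rw [mul_one] at h7
      rw [← h7, coeff 1 w, hab_eq 1, mul_one]
    have h6 : (a' - a) ⊗ₜ[F] w = 0 := by
      rw [TensorProduct.sub_tmul, h5, sub_self]
    have := tmul_eq_zero_left F A g _ w hw h6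
    rwa [sub_eq_zero] at this
end
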